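/- Let A be a k×j matrix with entries in {0,1} such that: (i) no two columns of A are equal; (ii) no two rows of A are equal; (iii) some column of A has all entries equal to 1. Then the rank of A over ℝ (equivalently over ℚ) is at least min(k, ⌊log₂ j⌋ + 1). -/

import Mathlib

open Finset Submodule Module

theorem rank_of_zero_one_matrix (k j : ℕ) (A : Matrix (Fin k) (Fin j) ℝ)
    (h01 : ∀ u v, A u v = 0 ∨ A u v = 1)
    (hcols : Function.Injective fun v u => A u v)
    (hrows : Function.Injective A)
    (hones : ∃ v, ∀ u, A u v = 1) :
    min k (Nat.log 2 j + 1) ≤ A.rank := by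
  classical
  rcases le_or_gt k A.rank with hk | hk
  · exact (min_le_left _ _).trans hk
  refine (min_le_right _ _).trans ?_
  obtain ⟨v₁, hv₁⟩ := hones
  have hj0 : j ≠ 0 := by rintro rfl; exact v₁.elim0
  rw [Nat.add_one_le_iff, Nat.log_lt_iff_lt_pow one_lt_two hj0]
  by_contra hle
  push_neg at hle
  -- hle : 2 ^ A.rank ≤ j
  set r := A.rank with hr
  have hrank : r = finrank ℝ (span ℝ (Set.range A)) := A.rank_eq_finrank_span_row
  obtain ⟨s, hs_sub, hs_span, hs_li⟩ := exists_linearIndependent ℝ (Set.range A)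
  have hs_fin : s.Finite := (Set.finite_range A).subset hs_sub
  haveI : Fintype s := hs_fin.fintype
  set t : Finset (Fin j → ℝ) := s.toFinset with ht
  have hts : (t : Set (Fin j → ℝ)) = s := Set.coe_toFinset s
  have hcard : t.card = r := by
    rw [hrank, ← hs_span, finrank_span_set_eq_card hs_li]
  -- rows in s take 0/1 values
  have hw01 : ∀ w ∈ s, ∀ v, w v = 0 ∨ w v = 1 := by
    rintro w hw v
    obtain ⟨u, rfl⟩ := hs_sub hw
    exact h01 u v
  -- the pattern map
  set φ : Fin j → (↥t → Bool) := fun v w => decide ((w : Fin j → ℝ) v = 1) with hφ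
  have hφinj : Function.Injective φ := by
    intro v v' h
    have hsv : ∀ w ∈ s, w v = w v' := by
      intro w hw
      have hwt : w ∈ t := Set.mem_toFinset.mpr hw
      have hiff : (w v = 1) ↔ (w v' = 1) := by
        have := congrFun h ⟨w, hwt⟩
        simpa [hφ, decide_eq_decide] using this
      rcases hw01 w hw v with h0 | h1
      · rcases hw01 w hw v' with h0' | h1'
        · rw [h0, h0']
        · exact absurd (hiff.mpr h1') (by rw [h0]; norm_num)
      · rw [h1, hiff.mp h1]
    have hall : ∀ u, A u v = A u v' := by
      intro u
      have hmem : A u ∈ span ℝ s := by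
        rw [hs_span]; exact subset_span (Set.mem_range_self u)
      set L : (Fin j → ℝ) →ₗ[ℝ] ℝ := (LinearMap.proj v : (Fin j → ℝ) →ₗ[ℝ] ℝ) - (LinearMap.proj v' : (Fin j → ℝ) →ₗ[ℝ] ℝ) with hL
      have hker : span ℝ s ≤ LinearMap.ker L := by
        rw [span_le]
        intro w hw
        simp only [SetLike.mem_coe, LinearMap.mem_ker, hL, LinearMap.sub_apply,
          LinearMap.proj_apply, hsv w hw, sub_self]
      have := hker hmem
      rw [LinearMap.mem_ker] at this
      rw [hL] at this
      simp only [LinearMap.sub_apply, LinearMap.proj_apply] at this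
      linarith
    exact hcols (funext hall)
  have hcard2 : Fintype.card (↥t → Bool) = 2 ^ r := by
    simp [Fintype.card_fun, hcard]
  have hle2 : j ≤ 2 ^ r := by
    have := Fintype.card_le_of_injective φ hφinj
    simpa [hcard2] using this
  have hφbij : Function.Bijective φ :=
    (Fintype.bijective_iff_injective_and_card φ).mpr
      ⟨hφinj, by simp [hcard2, le_antisymm hle2 hle]⟩
  -- for each boolean pattern there is a column realizing it
  have hpat : ∀ b : ↥t → Bool, ∃ v : Fin j,
      ∀ w, ∀ hw : w ∈ t, w v = if b ⟨w, hw⟩ then 1 else 0 := by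
    intro b
    obtain ⟨v, hv⟩ := hφbij.2 b
    refine ⟨v, fun w hw => ?_⟩
    have hb : decide (w v = 1) = b ⟨w, hw⟩ := congrFun hv ⟨w, hw⟩
    have hws : w ∈ s := Set.mem_toFinset.mp hw
    rcases hw01 w hws v with h0 | h1
    · cases hbv : b ⟨w, hw⟩
      · simp [h0]
      · rw [hbv] at hb
        have : w v = 1 := of_decide_eq_true hb
        simp [this]
    · cases hbv : b ⟨w, hw⟩
      · rw [hbv] at hb
        have : ¬ (w v = 1) := of_decide_eq_false hb
        exact absurd h1 this
      · simp [h1]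
  -- a row outside s
  have hrow : ∃ u₀, A u₀ ∉ s := by
    by_contra hcon
    push_neg at hcon
    have himg : Finset.univ.image A ⊆ t := by
      intro w hw
      obtain ⟨u, _, rfl⟩ := Finset.mem_image.mp hw
      exact Set.mem_toFinset.mpr (hcon u)
    have : k ≤ r := by
      calc k = (Finset.univ.image A).card := by
              rw [Finset.card_image_of_injective _ hrows, Finset.card_univ, Fintype.card_fin]
        _ ≤ t.card := Finset.card_le_card himg
        _ = r := hcard
    omega
  obtain ⟨u₀, hu₀⟩ := hrow
  have hmem : A u₀ ∈ span ℝ (↑t : Set (Fin j → ℝ)) := by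
    rw [hts, hs_span]; exact subset_span (Set.mem_range_self u₀)
  obtain ⟨c, -, hc⟩ := mem_span_finset.mp hmem
  -- evaluate the representation at a column
  have heval : ∀ v : Fin j, ∑ w ∈ t, c w * w v = A u₀ v := by
    intro v
    have := congrFun hc v
    simpa using this
  -- each coefficient is 0 or 1
  have hc01 : ∀ w ∈ t, c w = 0 ∨ c w = 1 := by
    intro w₂ hw₂
    obtain ⟨v, hv⟩ := hpat (fun w => decide (w = (⟨w₂, hw₂⟩ : ↥t)))
    have : ∑ w ∈ t, c w * w v = c w₂ := by
      rw [Finset.sum_eq_single_of_mem w₂ hw₂]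
      · rw [hv w₂ hw₂]; simp
      · intro w hw hne
        rw [hv w hw]
        have : ¬ ((⟨w, hw⟩ : ↥t) = ⟨w₂, hw₂⟩) := by
          simp only [Subtype.mk.injEq]; exact hne
        simp [this]
    rw [heval v] at this
    rw [← this]
    exact h01 u₀ v
  -- the sum of the coefficients is 0 or 1
  have hsum01 : (∑ w ∈ t, c w) = 0 ∨ (∑ w ∈ t, c w) = 1 := by
    obtain ⟨v, hv⟩ := hpat (fun _ => true)
    have : ∑ w ∈ t, c w * w v = ∑ w ∈ t, c w :=
      Finset.sum_congr rfl (fun w hw => by rw [hv w hw]; simp)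
    rw [heval v] at this
    rw [← this]
    exact h01 u₀ v
  rcases hsum01 with h0 | h1
  · -- all coefficients are 0, so row u₀ is zero, contradicting the all-ones column
    have hz : ∀ w ∈ t, c w = 0 := by
      intro w hw
      have hnn : ∀ w ∈ t, 0 ≤ c w := by
        intro w hw; rcases hc01 w hw with h | h <;> rw [h] <;> norm_num
      exact (Finset.sum_eq_zero_iff_of_nonneg hnn).mp h0 w hw
    have : A u₀ v₁ = 0 := by
      rw [← heval v₁]
      exact Finset.sum_eq_zero (fun w hw => by rw [hz w hw, zero_mul])
    rw [hv₁ u₀] at this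
    norm_num at this
  · -- exactly one coefficient is 1, so row u₀ equals a row in s
    set T : Finset (Fin j → ℝ) := t.filter (fun w => c w = 1) with hT
    have hTcard : (T.card : ℝ) = 1 := by
      rw [← h1]
      rw [Finset.sum_congr rfl (fun w hw => show c w = if c w = 1 then (1:ℝ) else 0 by
        rcases hc01 w hw with h | h <;> simp [h])]
      rw [Finset.sum_boole]
    have hTone : T.card = 1 := by exact_mod_cast hTcard
    obtain ⟨w₂, hw₂⟩ := Finset.card_eq_one.mp hTone
    have hw₂t : w₂ ∈ t := by
      have : w₂ ∈ T := by rw [hw₂]; exact Finset.mem_singleton_self w₂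
      exact Finset.mem_of_mem_filter _ this
    have hAw : A u₀ = w₂ := by
      rw [← hc]
      rw [Finset.sum_congr rfl (fun w hw => show c w • w = if c w = 1 then w else 0 by
        rcases hc01 w hw with h | h <;> simp [h])]
      rw [← Finset.sum_filter, ← hT, hw₂]
      simp
    exact hu₀ (hAw ▸ Set.mem_toFinset.mp hw₂t)
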